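/- arXiv:1106.5088 — 6 statements merged into one kernel-verified Lean document; each statement's English description precedes it below -/
import Mathlib

section
/- In a push-out diagram obtained from a short exact sequence 0 → Y →i X → Z → 0 and an operator j : Y → E, the resulting lower exact sequence 0 → E → PO → Z → 0 splits if and only if j extends to X, i.e. there exists a bounded operator T : X → E with T ∘ i = j. -/
section PushOut

variable {Y X E : Type} [NormedAddCommGroup Y] [NormedSpace ℝ Y]
  [NormedAddCommGroup X] [NormedSpace ℝ X]
  [NormedAddCommGroup E] [NormedSpace ℝ E]

/-- The diagonal subspace `Δ = closure {(j y, -i y) : y ∈ Y}` of `E × X`. -/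
noncomputable def poDelta (i : Y →L[ℝ] X) (j : Y →L[ℝ] E) : Submodule ℝ (E × X) :=
  (LinearMap.range ((j.prod (-i) : Y →L[ℝ] E × X) : Y →ₗ[ℝ] E × X)).topologicalClosure

instance (i : Y →L[ℝ] X) (j : Y →L[ℝ] E) : IsClosed ((poDelta i j : Submodule ℝ (E × X)) : Set (E × X)) :=
  Submodule.isClosed_topologicalClosure _

/-- The push-out `PO = (E × X)/Δ` of the operators `i : Y → X` and `j : Y → E`. -/
abbrev PushOut (i : Y →L[ℝ] X) (j : Y →L[ℝ] E) : Type :=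
  (E × X) ⧸ poDelta i j

end PushOut

/-- In a push-out diagram obtained from a short exact sequence `0 → Y →i X →q Z → 0`
and an operator `j : Y → E`, the lower exact sequence `0 → E →v PO → Z → 0` splits iff
`j` extends to `X` through `i`. -/
theorem stmt2
    {Y X Z E : Type} [NormedAddCommGroup Y] [NormedSpace ℝ Y] [CompleteSpace Y]
    [NormedAddCommGroup X] [NormedSpace ℝ X] [CompleteSpace X]
    [NormedAddCommGroup Z] [NormedSpace ℝ Z] [CompleteSpace Z]
    [NormedAddCommGroup E] [NormedSpace ℝ E] [CompleteSpace E]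
    (i : Y →L[ℝ] X) (q : X →L[ℝ] Z)
    (hi : Isometry i) (hq : Function.Surjective q)
    (hexact : LinearMap.ker (q : X →ₗ[ℝ] Z) = LinearMap.range (i : Y →ₗ[ℝ] X))
    (j : Y →L[ℝ] E)
    (v : E →L[ℝ] PushOut i j)
    (hv : ∀ e : E, v e = Submodule.Quotient.mk (e, 0)) :
    (∃ p : PushOut i j →L[ℝ] E, p.comp v = ContinuousLinearMap.id ℝ E) ↔
      (∃ T : X →L[ℝ] E, T.comp i = j) := by
  constructor
  · rintro ⟨p, hp⟩
    let w : X →L[ℝ] PushOut i j :=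
      LinearMap.mkContinuous
        ((poDelta i j).mkQ.comp (LinearMap.inr ℝ E X)) 1
        (fun x => by
          refine le_trans (Submodule.Quotient.norm_mk_le (poDelta i j) ((0 : E), x)) ?_
          simp [Prod.norm_def])
    refine ⟨p.comp w, ?_⟩
    ext y
    have hmem : ((j y, -(i y)) : E × X) ∈ poDelta i j :=
      Submodule.le_topologicalClosure _ ⟨y, rfl⟩
    have key : (Submodule.Quotient.mk ((0 : E), i y) : PushOut i j)
        = Submodule.Quotient.mk ((j y, 0) : E × X) := by
      rw [Submodule.Quotient.eq]
      simpa using (poDelta i j).neg_mem hmem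
    have hw : w (i y) = v (j y) := by
      rw [hv]
      show Submodule.Quotient.mk ((0 : E), i y) = _
      exact key
    have hpv : p (v (j y)) = j y := by
      simpa using ContinuousLinearMap.ext_iff.mp hp (j y)
    simp [ContinuousLinearMap.comp_apply, hw, hpv]
  · rintro ⟨T, hT⟩
    let f : E × X →L[ℝ] E :=
      (ContinuousLinearMap.fst ℝ E X) + T.comp (ContinuousLinearMap.snd ℝ E X)
    have hker : poDelta i j ≤ LinearMap.ker (f : E × X →ₗ[ℝ] E) := by
      apply Submodule.topologicalClosure_minimal
      · rintro _ ⟨y, rfl⟩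
        have hTy : T (i y) = j y := by
          simpa using ContinuousLinearMap.ext_iff.mp hT y
        simp [f, LinearMap.mem_ker, hTy]
      · exact ContinuousLinearMap.isClosed_ker f
    let L : PushOut i j →ₗ[ℝ] E := (poDelta i j).liftQ (f : E × X →ₗ[ℝ] E) hker
    have hLmk : ∀ m : E × X, L (Submodule.Quotient.mk m) = f m := fun m => rfl
    have hLbound : ∀ ξ : PushOut i j, ‖L ξ‖ ≤ ‖f‖ * ‖ξ‖ := by
      intro ξ
      refine le_of_forall_pos_le_add fun ε hε => ?_
      have hε' : 0 < ε / (‖f‖ + 1) := by positivity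
      obtain ⟨m, rfl, hm⟩ := Submodule.Quotient.norm_mk_lt ξ hε'
      calc ‖L (Submodule.Quotient.mk m)‖ = ‖f m‖ := by rw [hLmk]
        _ ≤ ‖f‖ * ‖m‖ := f.le_opNorm m
        _ ≤ ‖f‖ * (‖(Submodule.Quotient.mk m : PushOut i j)‖ + ε / (‖f‖ + 1)) := by
            exact mul_le_mul_of_nonneg_left hm.le (norm_nonneg f)
        _ ≤ ‖f‖ * ‖(Submodule.Quotient.mk m : PushOut i j)‖ + ε := by
            rw [mul_add]
            have h1 : ‖f‖ * (ε / (‖f‖ + 1)) ≤ ε := by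
              rw [mul_div_assoc']
              rw [div_le_iff₀ (by positivity)]
              nlinarith [norm_nonneg f, hε.le]
            linarith
    refine ⟨LinearMap.mkContinuous L ‖f‖ hLbound, ?_⟩
    ext e
    have : (LinearMap.mkContinuous L ‖f‖ hLbound) (v e) = f (e, 0) := by
      rw [hv]; rfl
    simpa [f] using this
end

section
/- If there is a bounded linear operator s : Y* → X* with i* ∘ s = id_{Y*} (i.e. the dual restriction map admits a bounded linear right inverse), then for every Banach space E every compact operator t : Y → E extends to a compact operator T : X → E with T ∘ i = t. -/
open NormedSpace

/-- Every weak-*-continuous linear functional on the dual is an evaluation. -/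
lemma weakdual_functional_eval {M : Type*} [NormedAddCommGroup M] [NormedSpace ℝ M]
    (F : WeakDual ℝ M →L[ℝ] ℝ) : ∃ φ : M, ∀ ψ : WeakDual ℝ M, F ψ = ψ φ := by
  set B := topDualPairing ℝ M with hB
  have hmem : F ⁻¹' (Metric.ball (0:ℝ) 1) ∈ nhds (0 : WeakDual ℝ M) := by
    have := F.continuous.continuousAt (x := 0)
    have h0 : Metric.ball (0:ℝ) 1 ∈ nhds (F 0) := by
      rw [map_zero]; exact Metric.ball_mem_nhds 0 one_pos
    exact this.preimage_mem_nhds h0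
  obtain ⟨U, hU, hUsub⟩ := (LinearMap.hasBasis_weakBilin B).mem_iff.mp hmem
  obtain ⟨I, r, hr, rfl⟩ := B.toSeminormFamily.basisSets_iff.mp hU
  set L : I → WeakDual ℝ M →ₗ[ℝ] ℝ := fun φ => B.flip φ.1 with hL
  have hker : ⨅ φ : I, LinearMap.ker (L φ) ≤ LinearMap.ker (F : WeakDual ℝ M →ₗ[ℝ] ℝ) := by
    intro ψ hψ
    simp only [Submodule.mem_iInf, LinearMap.mem_ker] at hψ ⊢
    by_contra hne
    have key : ∀ c : ℝ, |c| * |F ψ| < 1 := by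
      intro c
      have hball : c • ψ ∈ Seminorm.ball (I.sup B.toSeminormFamily) 0 r := by
        refine (Seminorm.mem_ball_zero _).mpr ?_
        refine lt_of_le_of_lt (Seminorm.finset_sup_apply_le le_rfl (fun φ hφ => ?_)) hr
        have h00 : B ψ φ = 0 := hψ ⟨φ, hφ⟩
        have h0x : B (c • ψ) φ = 0 := by
          rw [show B (c • ψ) = c • B ψ from B.map_smul c ψ]; simp [h00]
        exact le_of_eq (norm_eq_zero.mpr h0x)
      have hm : F (c • ψ) ∈ Metric.ball (0:ℝ) 1 := hUsub hball
      simpa [Real.norm_eq_abs] using hm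
    have habs : |F ψ| ≠ 0 := abs_ne_zero.mpr hne
    have h2 := key (2 / |F ψ|)
    rw [abs_div, abs_abs, div_mul_cancel₀ _ habs] at h2
    norm_num at h2
  have hspan := mem_span_of_iInf_ker_le_ker (𝕜 := ℝ) hker
  have hrange : Submodule.span ℝ (Set.range L) ≤ LinearMap.range (B.flip) := by
    refine Submodule.span_le.mpr ?_
    rintro _ ⟨φ, rfl⟩
    exact ⟨φ.1, rfl⟩
  obtain ⟨φ₀, hφ₀⟩ := hrange hspan
  exact ⟨φ₀, fun ψ => (LinearMap.congr_fun hφ₀ ψ).symm⟩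

open NormedSpace in
lemma rep_lemma {E : Type*} [NormedAddCommGroup E] [NormedSpace ℝ E]
    {C : Set E} (hC : IsCompact C) (hconv : Convex ℝ C)
    (ψ : StrongDual ℝ (StrongDual ℝ E))
    (h : ∀ f : StrongDual ℝ E, ∃ c ∈ C, ψ f ≤ f c) :
    ∃ e ∈ C, ∀ f : StrongDual ℝ E, ψ f = f e := by
  classical
  let j : E → WeakDual ℝ (StrongDual ℝ E) := fun e => inclusionInDoubleDual ℝ E e
  have hjcont : Continuous j :=
    WeakDual.continuous_of_continuous_eval (fun f => f.continuous)
  have hjC : IsCompact (j '' C) := hC.image hjcont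
  have hjCc : IsClosed (j '' C) := hjC.isClosed
  have hjconv : Convex ℝ (j '' C) :=
    hconv.is_linear_image ⟨fun x y => map_add _ x y, fun c x => map_smul _ c x⟩
  let ψ' : WeakDual ℝ (StrongDual ℝ E) := ψ
  by_cases hmem : ψ' ∈ j '' C
  · obtain ⟨e, heC, hje⟩ := hmem
    refine ⟨e, heC, fun f => ?_⟩
    have : j e f = f e := rfl
    rw [← this, hje]; rfl
  · exfalso
    haveI : LocallyConvexSpace ℝ (WeakDual ℝ (StrongDual ℝ E)) := by
      have := WeakBilin.locallyConvexSpace (𝕜 := ℝ) (E := StrongDual ℝ E →L[ℝ] ℝ)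
        (F := StrongDual ℝ E) (B := topDualPairing ℝ _)
      exact this
    obtain ⟨F, u, hFu, huψ⟩ := geometric_hahn_banach_closed_point hjconv hjCc hmem
    obtain ⟨φ, hφ⟩ := weakdual_functional_eval F
    obtain ⟨c, hcC, hc⟩ := h φ
    have h1 : F (j c) < u := hFu _ ⟨c, hcC, rfl⟩
    have h2 : F (j c) = φ c := by rw [hφ]; rfl
    have h3 : F ψ' = ψ φ := hφ _
    linarith

open Pointwise

/-- If the dual restriction map `i* : X* → Y*` admits a bounded linear right inverse `s`
(`i* ∘ s = id`), then for every Banach space `E` every compact operator `t : Y → E`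
extends through `i` to a compact operator `T : X → E`. -/
theorem stmt5
    {Y X Z : Type} [NormedAddCommGroup Y] [NormedSpace ℝ Y] [CompleteSpace Y]
    [NormedAddCommGroup X] [NormedSpace ℝ X] [CompleteSpace X]
    [NormedAddCommGroup Z] [NormedSpace ℝ Z] [CompleteSpace Z]
    (i : Y →L[ℝ] X) (q : X →L[ℝ] Z)
    (hi : Isometry i) (hq : Function.Surjective q)
    (hexact : LinearMap.ker (q : X →ₗ[ℝ] Z) = LinearMap.range (i : Y →ₗ[ℝ] X))
    (s : StrongDual ℝ Y →L[ℝ] StrongDual ℝ X)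
    (hs : ∀ g : StrongDual ℝ Y, (s g).comp i = g) :
    ∀ (E : Type) [NormedAddCommGroup E] [NormedSpace ℝ E] [CompleteSpace E],
      ∀ t : Y →L[ℝ] E, IsCompactOperator t →
        ∃ T : X →L[ℝ] E, IsCompactOperator T ∧ T.comp i = t := by
  intro E _ _ _ t ht
  classical
  -- the basic compact convex set
  set S : Set E := t '' Metric.closedBall 0 1 with hS
  set N : Set E := (fun e => -e) '' S with hN
  have hScl : IsCompact (closure S) :=
    IsCompactOperator.isCompact_closure_image_closedBall (𝕜₁ := ℝ)
      (f := (t : Y →ₗ[ℝ] E)) ht 1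
  have hStb : TotallyBounded S := hScl.totallyBounded.subset subset_closure
  have hNtb : TotallyBounded N := hStb.image uniformContinuous_neg
  set D : Set E := closure (convexHull ℝ (S ∪ N)) with hD
  have hDcompact : IsCompact D :=
    TotallyBounded.isCompact_of_isClosed
      ((totallyBounded_convexHull.mpr (hStb.union hNtb)).closure) isClosed_closure
  have hDconv : Convex ℝ D := (convex_convexHull ℝ _).closure
  have h0S : (0 : E) ∈ S := ⟨0, Metric.mem_closedBall_self zero_le_one, map_zero t⟩
  have h0D : (0 : E) ∈ D :=
    subset_closure (subset_convexHull ℝ _ (Or.inl h0S))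
  have hSD : S ⊆ D := fun e he => subset_closure (subset_convexHull ℝ _ (Or.inl he))
  have hND : N ⊆ D := fun e he => subset_closure (subset_convexHull ℝ _ (Or.inr he))
  set k : ℝ := ‖s‖ + 1 with hk
  have hkpos : 0 < k := by positivity
  -- the functional family
  set A : StrongDual ℝ E →L[ℝ] StrongDual ℝ Y := (ContinuousLinearMap.compL ℝ Y E ℝ).flip t with hA
  have hA_apply : ∀ f : StrongDual ℝ E, A f = f.comp t := fun f => rfl
  set psi : X → StrongDual ℝ (StrongDual ℝ E) :=
    fun x => (inclusionInDoubleDual ℝ X x).comp (s.comp A) with hpsi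
  have hpsi_apply : ∀ (x : X) (f : StrongDual ℝ E), psi x f = s (f.comp t) x := fun x f => rfl
  -- the compact convex sets
  set C : X → Set E := fun x => (k * ‖x‖) • D with hC
  have hCcompact : ∀ x, IsCompact (C x) := by
    intro x
    have : IsCompact ((k * ‖x‖) • D) := by
      rw [← Set.image_smul]
      exact hDcompact.image (continuous_const_smul _)
    exact this
  have hCconv : ∀ x, Convex ℝ (C x) := fun x => hDconv.smul _
  have h0C : ∀ x, (0 : E) ∈ C x := by
    intro x
    have := Set.smul_mem_smul_set (a := k * ‖x‖) h0D
    rwa [smul_zero] at this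
  -- domination
  have hdom : ∀ (x : X) (f : StrongDual ℝ E), ∃ c ∈ C x, psi x f ≤ f c := by
    intro x f
    obtain ⟨c₀, hc₀C, hmax⟩ :=
      (hCcompact x).exists_isMaxOn ⟨0, h0C x⟩ (f.continuous.continuousOn)
    refine ⟨c₀, hc₀C, ?_⟩
    have hf0 : (0 : ℝ) ≤ f c₀ := by
      have := hmax (h0C x)
      simpa using this
    by_cases hx : x = 0
    · have : psi x f = 0 := by
        rw [hx, hpsi_apply]; exact map_zero (s (f.comp t))
      rw [this]; exact hf0
    · set a : ℝ := k * ‖x‖ with ha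
      have hapos : 0 < a := by
        have : 0 < ‖x‖ := norm_pos_iff.mpr hx
        positivity
      -- bound on ‖f ∘ t‖
      have hAf : ‖A f‖ ≤ f c₀ / a := by
        refine ContinuousLinearMap.opNorm_le_bound _ (div_nonneg hf0 hapos.le) ?_
        intro y
        by_cases hy : y = 0
        · simp [hy]
        · have hynorm : 0 < ‖y‖ := norm_pos_iff.mpr hy
          set y' : Y := ‖y‖⁻¹ • y with hy'
          have hy'ball : y' ∈ Metric.closedBall (0 : Y) 1 := by
            rw [Metric.mem_closedBall, dist_zero_right, hy', norm_smul,
              norm_inv, norm_norm, inv_mul_cancel₀ hynorm.ne']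
          have hty'S : t y' ∈ S := ⟨y', hy'ball, rfl⟩
          have hnty'N : -t y' ∈ N := ⟨t y', hty'S, rfl⟩
          have h1 : a * f (t y') ≤ f c₀ := by
            have hmem : a • t y' ∈ C x := Set.smul_mem_smul_set (hSD hty'S)
            have := hmax hmem
            simpa [map_smul, smul_eq_mul] using this
          have h2 : a * (-(f (t y'))) ≤ f c₀ := by
            have hmem : a • (-t y') ∈ C x := Set.smul_mem_smul_set (hND hnty'N)
            have := hmax hmem
            simpa [map_smul, smul_eq_mul] using this
          have habs : |f (t y')| ≤ f c₀ / a := by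
            rw [le_div_iff₀ hapos]
            rcases abs_cases (f (t y')) with ⟨h, _⟩ | ⟨h, _⟩ <;> rw [h] <;> linarith
          have hty : t y = ‖y‖ • t y' := by
            rw [hy', map_smul, smul_smul, mul_inv_cancel₀ hynorm.ne', one_smul]
          calc ‖(A f) y‖ = ‖f (t y)‖ := rfl
            _ = ‖y‖ * |f (t y')| := by
                rw [hty, map_smul, smul_eq_mul, Real.norm_eq_abs, abs_mul, abs_of_pos hynorm]
            _ ≤ ‖y‖ * (f c₀ / a) := by
                exact mul_le_mul_of_nonneg_left habs hynorm.le
            _ = f c₀ / a * ‖y‖ := mul_comm _ _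
      -- conclude
      calc psi x f = s (A f) x := rfl
        _ ≤ ‖s (A f) x‖ := le_abs_self _
        _ ≤ ‖s (A f)‖ * ‖x‖ := ContinuousLinearMap.le_opNorm _ _
        _ ≤ (‖s‖ * ‖A f‖) * ‖x‖ :=
            mul_le_mul_of_nonneg_right (s.le_opNorm _) (norm_nonneg x)
        _ = (‖s‖ * ‖x‖) * ‖A f‖ := by ring
        _ ≤ a * (f c₀ / a) := by
            refine mul_le_mul ?_ hAf (norm_nonneg _) hapos.le
            have : ‖s‖ ≤ k := by rw [hk]; linarith
            exact mul_le_mul_of_nonneg_right this (norm_nonneg x)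
        _ = f c₀ := mul_div_cancel₀ _ hapos.ne'
  -- representation
  have hrep : ∀ x : X, ∃ e, e ∈ C x ∧ ∀ f : StrongDual ℝ E, psi x f = f e := by
    intro x
    obtain ⟨e, he, hf⟩ := rep_lemma (hCcompact x) (hCconv x) (psi x) (hdom x)
    exact ⟨e, he, hf⟩
  set Tf : X → E := fun x => (hrep x).choose with hTf
  have hTfC : ∀ x, Tf x ∈ C x := fun x => (hrep x).choose_spec.1
  have hTfdual : ∀ (x : X) (f : StrongDual ℝ E), f (Tf x) = psi x f :=
    fun x f => ((hrep x).choose_spec.2 f).symm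
  -- linearity
  have hadd : ∀ x y : X, Tf (x + y) = Tf x + Tf y := by
    intro x y
    rw [eq_iff_forall_dual_eq (𝕜 := ℝ)]
    intro g
    rw [map_add g, hTfdual, hTfdual, hTfdual]
    show s (A g) (x + y) = s (A g) x + s (A g) y
    exact map_add _ x y
  have hsmul : ∀ (c : ℝ) (x : X), Tf (c • x) = c • Tf x := by
    intro c x
    rw [eq_iff_forall_dual_eq (𝕜 := ℝ)]
    intro g
    rw [map_smul g, hTfdual, hTfdual]
    show s (A g) (c • x) = c • s (A g) x
    exact map_smul _ c x
  set Tlin : X →ₗ[ℝ] E :=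
    { toFun := Tf, map_add' := hadd, map_smul' := hsmul } with hTlin
  have hbound : ∀ x : X, ‖Tlin x‖ ≤ ‖s‖ * ‖t‖ * ‖x‖ := by
    intro x
    refine norm_le_dual_bound ℝ _ (by positivity) ?_
    intro g
    have h1 : g (Tlin x) = s (g.comp t) x := hTfdual x g
    rw [h1]
    calc ‖s (g.comp t) x‖ ≤ ‖s (g.comp t)‖ * ‖x‖ := ContinuousLinearMap.le_opNorm _ _
      _ ≤ (‖s‖ * ‖g.comp t‖) * ‖x‖ :=
          mul_le_mul_of_nonneg_right (s.le_opNorm _) (norm_nonneg x)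
      _ ≤ (‖s‖ * (‖g‖ * ‖t‖)) * ‖x‖ := by
          refine mul_le_mul_of_nonneg_right ?_ (norm_nonneg x)
          exact mul_le_mul_of_nonneg_left (ContinuousLinearMap.opNorm_comp_le g t)
            (norm_nonneg s)
      _ = ‖s‖ * ‖t‖ * ‖x‖ * ‖g‖ := by ring
  set T : X →L[ℝ] E := Tlin.mkContinuous (‖s‖ * ‖t‖) hbound with hT
  have hTapp : ∀ x, T x = Tf x := fun x => rfl
  refine ⟨T, ?_, ?_⟩
  · -- compactness
    have hKcompact : IsCompact (k • D) := by
      rw [← Set.image_smul]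
      exact hDcompact.image (continuous_const_smul _)
    refine (isCompactOperator_iff_image_ball_subset_compact (𝕜₁ := ℝ)
      (f := (T : X →ₗ[ℝ] E)) one_pos).mpr ⟨k • D, hKcompact, ?_⟩
    rintro _ ⟨x, hx, rfl⟩
    have hxball : ‖x‖ < 1 := by rwa [Metric.mem_ball, dist_zero_right] at hx
    obtain ⟨d, hd, hdx⟩ := hTfC x
    have : (k * ‖x‖) • d = k • (‖x‖ • d) := by rw [smul_smul]
    have hmem : ‖x‖ • d ∈ D := by
      have := hDconv (a := ‖x‖) (b := 1 - ‖x‖) hd h0D (norm_nonneg x)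
        (by linarith) (by ring)
      rwa [smul_zero, add_zero] at this
    have hdx' : (k * ‖x‖) • d = Tf x := hdx
    show T x ∈ k • D
    rw [hTapp, ← hdx', this]
    exact Set.smul_mem_smul_set hmem
  · -- extension property
    ext y
    rw [eq_iff_forall_dual_eq (𝕜 := ℝ)]
    intro g
    show g (T (i y)) = g (t y)
    rw [hTapp, hTfdual]
    show s (g.comp t) (i y) = g (t y)
    have := hs (g.comp t)
    calc s (g.comp t) (i y) = ((s (g.comp t)).comp i) y := rfl
      _ = (g.comp t) y := by rw [this]
      _ = g (t y) := rfl
end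

section
/- Every bounded operator T : c₀ → Y that is weakly compact is compact. -/
open Metric ZeroAtInfty

/-- An operator is weakly compact if the image of the closed unit ball is relatively
compact in the weak topology. -/
def IsWeaklyCompactOperator {V X : Type*} [NormedAddCommGroup V] [NormedSpace ℝ V]
    [NormedAddCommGroup X] [NormedSpace ℝ X] (T : V →L[ℝ] X) : Prop :=
  IsCompact (closure ((toWeakSpace ℝ X) '' (T '' closedBall 0 1)))


section Aux
open Filter Finset Topology
noncomputable section
namespace Stmt12

lemma rosenthal (m : ℕ → ℕ → ℝ) (hm : ∀ p i, 0 ≤ m p i) {C : ℝ}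
    (hC : ∀ p (I : Finset ℕ), ∑ i ∈ I, m p i ≤ C) {ε : ℝ} (hε : 0 < ε) :
    ∃ A : Set ℕ, A.Infinite ∧ ∀ p ∈ A, ∀ I : Finset ℕ, ↑I ⊆ A \ {p} →
      ∑ i ∈ I, m p i ≤ ε := by
  classical
  by_contra hcon
  push_neg at hcon
  -- hcon : ∀ A, A.Infinite → ∃ p ∈ A, ∃ I, ↑I ⊆ A \ {p} ∧ ε < ∑ i ∈ I, m p i
  have Q : ∀ j : ℕ, ∃ B : Set ℕ, B.Infinite ∧ ∃ h : ℕ → Fin j → Finset ℕ, ∀ p ∈ B,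
      (∀ l, ε < ∑ i ∈ h p l, m p i) ∧ (∀ l, ∀ q ∈ h p l, q ∉ B) ∧
      (∀ l l', l ≠ l' → Disjoint (h p l) (h p l')) := by
    intro j
    induction j with
    | zero =>
      exact ⟨Set.univ, Set.infinite_univ, fun _ => Fin.elim0, fun p _ =>
        ⟨fun l => l.elim0, fun l => l.elim0, fun l => l.elim0⟩⟩
    | succ j ih =>
      obtain ⟨B, hB, h, hh⟩ := ih
      haveI := hB.to_subtype
      obtain ⟨dd⟩ := nonempty_denumerable ↥B
      let e : ℕ ≃ ↥B := (Denumerable.eqv ↥B).symm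
      let pair : ℕ × ℕ ≃ ℕ := Denumerable.eqv (ℕ × ℕ)
      set g : ℕ → ℕ → ℕ := fun k n => (e (pair (k, n)) : ℕ) with hg
      have hginj : ∀ k n k' n', g k n = g k' n' → k = k' ∧ n = n' := by
        intro k n k' n' hgg
        have : (k, n) = (k', n') := by
          have h1 : e (pair (k, n)) = e (pair (k', n')) := Subtype.ext hgg
          have h2 := e.injective h1
          exact pair.injective h2
        exact ⟨congrArg Prod.fst this, congrArg Prod.snd this⟩
      have hgB : ∀ k n, g k n ∈ B := fun k n => (e (pair (k, n))).2
      have hBk : ∀ k, (Set.range (g k)).Infinite := fun k =>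
        Set.infinite_range_of_injective (fun n n' hnn => (hginj k n k n' hnn).2)
      have hsel : ∀ k, ∃ p ∈ Set.range (g k), ∃ I : Finset ℕ,
          ↑I ⊆ Set.range (g k) \ {p} ∧ ε < ∑ i ∈ I, m p i := fun k => hcon _ (hBk k)
      choose p hpB I hI hsum using hsel
      have hpinj : Function.Injective p := by
        intro k k' hkk
        obtain ⟨n, hn⟩ := hpB k
        obtain ⟨n', hn'⟩ := hpB k'
        exact (hginj k n k' n' (by rw [hn, hn', hkk])).1
      set B' : Set ℕ := Set.range p with hB'
      have hB'B : B' ⊆ B := by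
        rintro _ ⟨k, rfl⟩
        obtain ⟨n, hn⟩ := hpB k
        exact hn ▸ hgB k n
      refine ⟨B', Set.infinite_range_of_injective hpinj, fun q =>
        Fin.snoc (h q) (if hq : ∃ k, p k = q then I (Classical.choose hq) else ∅), ?_⟩
      rintro q hqB'
      beta_reduce
      have hex : ∃ k, p k = q := hqB'
      set k := Classical.choose hex with hk
      have hpk : p k = q := Classical.choose_spec hex
      have hqBB : q ∈ B := hB'B hqB'
      obtain ⟨hold1, hold2, hold3⟩ := hh q hqBB
      have hInew : ∀ i ∈ I k, i ∈ Set.range (g k) \ {p k} := fun i hi => hI k hi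
      have hnewB : ∀ i ∈ I k, i ∈ B := fun i hi => by
        obtain ⟨⟨n, hn⟩, _⟩ := hInew i hi
        exact hn ▸ hgB k n
      have hnewB' : ∀ i ∈ I k, i ∉ B' := by
        intro i hi
        rintro ⟨k', rfl⟩
        obtain ⟨⟨n, hn⟩, hne⟩ := hInew (p k') hi
        obtain ⟨n', hn'⟩ := hpB k'
        have := (hginj k' n' k n (by rw [hn', hn])).1
        subst this
        exact hne rfl
      have hsnoc_last : (Fin.snoc (h q) (if hq : ∃ k, p k = q then I (Classical.choose hq)
          else ∅) : Fin (j+1) → Finset ℕ) (Fin.last j) = I k := by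
        rw [Fin.snoc_last, dif_pos hex]
      have hsnoc_cast : ∀ l : Fin j, (Fin.snoc (h q) (if hq : ∃ k, p k = q then
          I (Classical.choose hq) else ∅) : Fin (j+1) → Finset ℕ) l.castSucc = h q l :=
        fun l => Fin.snoc_castSucc ..
      refine ⟨?_, ?_, ?_⟩
      · intro l
        refine Fin.lastCases ?_ ?_ l
        · rw [hsnoc_last, ← hpk]; exact hsum k
        · intro l'; rw [hsnoc_cast]; exact hold1 l'
      · intro l
        refine Fin.lastCases ?_ ?_ l
        · rw [hsnoc_last]; exact fun i hi => hnewB' i hi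
        · intro l' i hi hiB'
          rw [hsnoc_cast] at hi
          exact hold2 l' i hi (hB'B hiB')
      · have hdnew : ∀ l : Fin j, Disjoint (h q l) (I k) := by
          intro l
          rw [Finset.disjoint_left]
          intro i hi hi'
          exact hold2 l i hi (hnewB i hi')
        intro l l' hll
        rcases Fin.eq_castSucc_or_eq_last l with ⟨a, rfl⟩ | rfl <;>
          rcases Fin.eq_castSucc_or_eq_last l' with ⟨b, rfl⟩ | rfl <;>
          simp only [hsnoc_last, hsnoc_cast]
        · exact hold3 a b (by rintro rfl; exact hll rfl)
        · exact hdnew a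
        · exact (hdnew b).symm
        · exact absurd rfl hll
  obtain ⟨n, hn⟩ := exists_nat_gt (C / ε)
  have hnε : C < n * ε := (div_lt_iff₀ hε).mp hn
  obtain ⟨B, hB, h, hh⟩ := Q n
  obtain ⟨q, hq⟩ := hB.nonempty
  obtain ⟨h1, _, h3⟩ := hh q hq
  have hdisj : (↑(Finset.univ : Finset (Fin n)) : Set (Fin n)).PairwiseDisjoint (h q) := by
    intro a _ b _ hab
    exact h3 a b hab
  have := Finset.sum_biUnion (f := m q) hdisj
  have hge : (n : ℝ) * ε ≤ ∑ l : Fin n, ∑ i ∈ h q l, m q i := by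
    calc (n : ℝ) * ε = ∑ _l : Fin n, ε := by
          rw [Finset.sum_const, Finset.card_univ, Fintype.card_fin, nsmul_eq_mul]
      _ ≤ _ := Finset.sum_le_sum (fun l _ => (h1 l).le)
  have hle := hC q (Finset.univ.biUnion (h q))
  rw [this] at hle
  linarith


def ind (c : ℕ → ℝ) (F : Finset ℕ) : C₀(ℕ, ℝ) where
  toFun k := if k ∈ F then c k else 0
  continuous_toFun := continuous_of_discreteTopology
  zero_at_infty' := by
    rw [Filter.cocompact_eq_cofinite, Nat.cofinite_eq_atTop]
    refine tendsto_nhds_of_eventually_eq ?_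
    filter_upwards [eventually_gt_atTop (if h : F.Nonempty then F.max' h else 0)] with k hk
    simp only [ite_eq_right_iff]
    intro hkF
    exfalso
    split at hk
    · exact absurd (Finset.le_max' F k hkF) (not_le.mpr hk)
    · exact ‹¬F.Nonempty› ⟨k, hkF⟩

@[simp] lemma ind_apply (c : ℕ → ℝ) (F : Finset ℕ) (k : ℕ) :
    ind c F k = if k ∈ F then c k else 0 := rfl

lemma coe_sum (I : Finset ℕ) (u : ℕ → C₀(ℕ, ℝ)) (k : ℕ) :
    (∑ p ∈ I, u p) k = ∑ p ∈ I, u p k := by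
  induction I using Finset.cons_induction with
  | empty => rfl
  | cons a s ha ih => rw [Finset.sum_cons, Finset.sum_cons, ← ih]; rfl

lemma norm_apply_le (f : C₀(ℕ, ℝ)) (k : ℕ) : |f k| ≤ ‖f‖ := by
  rw [← ZeroAtInftyContinuousMap.norm_toBCF_eq_norm]
  exact f.toBCF.norm_coe_le_norm k

lemma norm_le_of_forall {f : C₀(ℕ, ℝ)} {C : ℝ} (hC : 0 ≤ C) (h : ∀ k, |f k| ≤ C) :
    ‖f‖ ≤ C := by
  rw [← ZeroAtInftyContinuousMap.norm_toBCF_eq_norm]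
  exact BoundedContinuousFunction.norm_le hC |>.mpr h

variable {Y : Type} [NormedAddCommGroup Y] [NormedSpace ℝ Y]

/-- Sum of disjointly supported elements of the unit ball, with coefficients of
absolute value at most 1, lies in the unit ball. -/
lemma sum_norm_le (u : ℕ → C₀(ℕ, ℝ)) (S : ℕ → Finset ℕ)
    (hsupp : ∀ p k, k ∉ S p → u p k = 0)
    (hdisj : ∀ p q, p ≠ q → Disjoint (S p) (S q))
    (hnorm : ∀ p, ‖u p‖ ≤ 1) (I : Finset ℕ) (δ : ℕ → ℝ) (hδ : ∀ p, |δ p| ≤ 1) :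
    ‖∑ p ∈ I, δ p • u p‖ ≤ 1 := by
  refine norm_le_of_forall zero_le_one fun k => ?_
  have hk : (∑ p ∈ I, δ p • u p) k = ∑ p ∈ I, δ p * u p k := by
    rw [coe_sum]
    exact Finset.sum_congr rfl fun _ _ => rfl
  rw [hk]
  by_cases hex : ∃ p₀ ∈ I, k ∈ S p₀
  · obtain ⟨p₀, hp₀I, hp₀⟩ := hex
    rw [Finset.sum_eq_single_of_mem p₀ hp₀I (fun p hpI hpne => by
      rw [hsupp p k (fun hkp => absurd hp₀ (Finset.disjoint_left.mp (hdisj p p₀ hpne) hkp)),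
        mul_zero])]
    calc |δ p₀ * u p₀ k| = |δ p₀| * |u p₀ k| := abs_mul _ _
      _ ≤ 1 * 1 := by
          refine mul_le_mul (hδ p₀) ((norm_apply_le _ k).trans (hnorm p₀)) (abs_nonneg _)
            zero_le_one
      _ = 1 := one_mul 1
  · push_neg at hex
    rw [Finset.sum_eq_zero fun p hp => by rw [hsupp p k (hex p hp), mul_zero]]
    simp

lemma clusterPt_mem_closed {g : ℕ → ℝ} {x : ℝ} (h : ClusterPt x (map g atTop))
    {C : Set ℝ} (hC : IsClosed C) (hev : ∀ᶠ n in atTop, g n ∈ C) : x ∈ C := by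
  have hle : map g atTop ≤ 𝓟 C := le_principal_iff.mpr (mem_map.mpr hev)
  have := mem_closure_iff_clusterPt.mpr (h.mono hle)
  rwa [hC.closure_eq] at this

lemma weak_eval_continuous (g : Y →L[ℝ] ℝ) :
    Continuous fun z : WeakSpace ℝ Y => g ((toWeakSpace ℝ Y).symm z) :=
  WeakBilin.eval_continuous _ g

/-- The key consequence of weak compactness: there is no sequence of disjointly supported
elements of the unit ball whose images have norms bounded below. -/
lemma block_lemma (T : C₀(ℕ, ℝ) →L[ℝ] Y) (hT : IsWeaklyCompactOperator T)
    (u : ℕ → C₀(ℕ, ℝ)) (S : ℕ → Finset ℕ)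
    (hsupp : ∀ p k, k ∉ S p → u p k = 0)
    (hdisj : ∀ p q, p ≠ q → Disjoint (S p) (S q))
    (hnorm : ∀ p, ‖u p‖ ≤ 1) {ε : ℝ} (hε : 0 < ε) (hbig : ∀ p, ε < ‖T (u p)‖) : False := by
  classical
  -- dual functionals attaining the norm
  have hTu0 : ∀ p, T (u p) ≠ 0 := fun p h =>
    absurd (hbig p) (by rw [h, norm_zero]; exact not_lt.mpr hε.le)
  choose f hf1 hf2 using fun p => exists_dual_vector ℝ (T (u p)) (norm_ne_zero_iff.mpr (hTu0 p))
  set m : ℕ → ℕ → ℝ := fun p i => |f p (T (u i))| with hm_def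
  have hm : ∀ p i, 0 ≤ m p i := fun p i => abs_nonneg _
  -- row bound
  have hrow : ∀ p (I : Finset ℕ), ∑ i ∈ I, m p i ≤ ‖T‖ := by
    intro p I
    set δ : ℕ → ℝ := fun i => if 0 ≤ f p (T (u i)) then (1:ℝ) else -1 with hδ_def
    have hδ : ∀ i, |δ i| ≤ 1 := fun i => by
      by_cases h : 0 ≤ f p (T (u i)) <;> simp [hδ_def, h]
    set v : C₀(ℕ, ℝ) := ∑ i ∈ I, δ i • u i with hv_def
    have hvnorm : ‖v‖ ≤ 1 := sum_norm_le u S hsupp hdisj hnorm I δ hδ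
    have hTv : f p (T v) = ∑ i ∈ I, m p i := by
      rw [hv_def, map_sum, map_sum]
      refine Finset.sum_congr rfl fun i _ => ?_
      rw [map_smul, map_smul]
      by_cases h : 0 ≤ f p (T (u i))
      · simp [hδ_def, h, m, abs_of_nonneg h]
      · simp [hδ_def, h, m, abs_of_neg (not_le.mp h)]
      
    calc ∑ i ∈ I, m p i = f p (T v) := hTv.symm
      _ ≤ |f p (T v)| := le_abs_self _
      _ ≤ ‖f p‖ * ‖T v‖ := (f p).le_opNorm (T v)
      _ ≤ 1 * (‖T‖ * ‖v‖) := by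
          rw [hf1 p, one_mul, one_mul]; exact T.le_opNorm v
      _ ≤ ‖T‖ := by
          rw [one_mul]
          calc ‖T‖ * ‖v‖ ≤ ‖T‖ * 1 := by
                exact mul_le_mul_of_nonneg_left hvnorm (norm_nonneg T)
            _ = ‖T‖ := mul_one _
  -- Rosenthal's lemma
  have hε4 : 0 < ε / 4 := by linarith
  obtain ⟨A, hA, hAsmall⟩ := rosenthal m hm hrow hε4
  -- enumerate A
  haveI := hA.to_subtype
  set a : ℕ → ℕ := fun n => (Nat.Subtype.orderIsoOfNat A n : ℕ) with ha_def
  have haA : ∀ n, a n ∈ A := fun n => (Nat.Subtype.orderIsoOfNat A n).2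
  have hainj : Function.Injective a := fun n n' h =>
    (Nat.Subtype.orderIsoOfNat A).injective (Subtype.ext h)
  -- partial sums
  set w : ℕ → C₀(ℕ, ℝ) := fun n => ∑ q ∈ Finset.range (n+1), u (a q) with hw_def
  have hwnorm : ∀ n, ‖w n‖ ≤ 1 := by
    intro n
    have : w n = ∑ p ∈ (Finset.range (n+1)).image a, (1:ℝ) • u p := by
      rw [hw_def, Finset.sum_image (fun x _ y _ h => hainj h)]
      simp
    rw [this]
    exact sum_norm_le u S hsupp hdisj hnorm _ _ (fun p => by norm_num)
  -- the cluster point y of T (w n) in the weak topology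
  set KS := closure ((toWeakSpace ℝ Y) '' (T '' closedBall 0 1)) with hKS
  have hmem : ∀ n, toWeakSpace ℝ Y (T (w n)) ∈ KS :=
    fun n => subset_closure ⟨T (w n), ⟨w n, mem_closedBall_zero_iff.mpr (hwnorm n), rfl⟩, rfl⟩
  obtain ⟨y, hyK, hy⟩ := hT.exists_clusterPt
    (f := map (fun n => toWeakSpace ℝ Y (T (w n))) atTop)
    (le_principal_iff.mpr (mem_map.mpr (Eventually.of_forall hmem)))
  set y₀ : Y := (toWeakSpace ℝ Y).symm y with hy₀
  -- weak-* cluster point of the functionals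
  have hfball : ∀ q, (StrongDual.toWeakDual (f (a q))) ∈
      (WeakDual.toStrongDual ⁻¹' closedBall (0 : StrongDual ℝ Y) 1) := by
    intro q
    simp only [Set.mem_preimage, mem_closedBall_zero_iff]
    show ‖f (a q)‖ ≤ 1
    rw [hf1]
  obtain ⟨φ, hφB, hφ⟩ := (WeakDual.isCompact_closedBall (𝕜 := ℝ) (0 : StrongDual ℝ Y)
    1).exists_clusterPt (f := map (fun q => StrongDual.toWeakDual (f (a q))) atTop)
    (le_principal_iff.mpr (mem_map.mpr (Eventually.of_forall hfball)))
  -- computation of f p (T (w n))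
  have hcomp : ∀ p n, f p (T (w n)) = ∑ q ∈ Finset.range (n+1), f p (T (u (a q))) := by
    intro p n
    rw [hw_def, map_sum, map_sum]
  -- off-diagonal bounds
  have hoff : ∀ p ∈ A, ∀ (J : Finset ℕ), (∀ q ∈ J, a q ≠ p) →
      |∑ q ∈ J, f p (T (u (a q)))| ≤ ε / 4 := by
    intro p hp J hJ
    calc |∑ q ∈ J, f p (T (u (a q)))| ≤ ∑ q ∈ J, m p (a q) :=
          (Finset.abs_sum_le_sum_abs _ _)
      _ = ∑ i ∈ J.image a, m p i := by
          rw [Finset.sum_image (fun x _ y _ h => hainj h)]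
      _ ≤ ε / 4 := by
          refine hAsmall p hp _ fun i hi => ?_
          obtain ⟨q, hqJ, rfl⟩ := Finset.mem_image.mp (Finset.mem_coe.mp hi)
          exact ⟨haA q, hJ q hqJ⟩
  -- Fact (i): f p y₀ ≥ 3ε/4 for p ∈ A
  have fact1 : ∀ q : ℕ, 3 * ε / 4 ≤ f (a q) y₀ := by
    intro q₀
    set p := a q₀ with hp_def
    have hclus : ClusterPt (f p y₀) (map (fun n => f p (T (w n))) atTop) :=
      hy.map ((weak_eval_continuous (f p)).continuousAt) (le_of_eq Filter.map_map)
    refine clusterPt_mem_closed hclus (isClosed_Ici (a := 3 * ε / 4)) ?_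
    filter_upwards [eventually_ge_atTop q₀] with n hn
    have hq₀mem : q₀ ∈ Finset.range (n+1) := Finset.mem_range.mpr (by omega)
    rw [hcomp p n, ← Finset.sum_erase_add _ _ hq₀mem]
    have hdiag : f p (T (u (a q₀))) = ‖T (u p)‖ := by rw [← hp_def, hf2]; rfl
    have hrest : |∑ q ∈ (Finset.range (n+1)).erase q₀, f p (T (u (a q)))| ≤ ε / 4 := by
      refine hoff p (haA q₀) _ fun q hq => ?_
      intro hqa
      exact (Finset.ne_of_mem_erase hq) (hainj hqa)
    have := hbig p
    rw [hdiag]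
    have h1 : -(ε/4) ≤ ∑ q ∈ (Finset.range (n+1)).erase q₀, f p (T (u (a q))) :=
      neg_le_of_abs_le hrest
    show _ ∈ Set.Ici _
    rw [Set.mem_Ici]
    linarith
  -- Fact (ii): |φ (T (w n))| ≤ ε/4 for all n
  have fact2 : ∀ n, |φ (T (w n))| ≤ ε / 4 := by
    intro n
    have hclus : ClusterPt (φ (T (w n))) (map (fun q => f (a q) (T (w n))) atTop) :=
      hφ.map ((WeakDual.eval_continuous (T (w n))).continuousAt) (le_of_eq Filter.map_map)
    have := clusterPt_mem_closed hclus (isClosed_Icc (a := -(ε/4)) (b := ε/4)) ?_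
    · exact abs_le.mpr this
    filter_upwards [eventually_gt_atTop n] with q hq
    have : |f (a q) (T (w n))| ≤ ε / 4 := by
      rw [hcomp]
      refine hoff (a q) (haA q) _ fun q' hq' hqa => ?_
      have h1 : q' = q := hainj hqa
      have h2 := Finset.mem_range.mp hq'
      omega
    exact abs_le.mp this
  -- Fact (iii)(b): φ y₀ ≥ 3ε/4
  have fact3 : 3 * ε / 4 ≤ φ y₀ := by
    have hclus : ClusterPt (φ y₀) (map (fun q => f (a q) y₀) atTop) :=
      hφ.map ((WeakDual.eval_continuous y₀).continuousAt) (le_of_eq Filter.map_map)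
    exact clusterPt_mem_closed hclus (isClosed_Ici (a := 3 * ε / 4))
      (Eventually.of_forall fact1)
  -- Fact (iii)(a): |φ y₀| ≤ ε/4
  have fact4 : |φ y₀| ≤ ε / 4 := by
    set φ' : Y →L[ℝ] ℝ := WeakDual.toStrongDual φ with hφ'
    have hclus : ClusterPt (φ' y₀) (map (fun n => φ' (T (w n))) atTop) :=
      hy.map ((weak_eval_continuous φ').continuousAt) (le_of_eq Filter.map_map)
    have hmem := clusterPt_mem_closed hclus (isClosed_Icc (a := -(ε/4)) (b := ε/4))
      (Eventually.of_forall fun n => abs_le.mp (fact2 n))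
    exact abs_le.mpr hmem
  have := abs_le.mp fact4
  linarith

/-- Tail uniform smallness from weak compactness. -/
lemma core (T : C₀(ℕ, ℝ) →L[ℝ] Y) (hT : IsWeaklyCompactOperator T) {ε : ℝ} (hε : 0 < ε) :
    ∃ N : ℕ, ∀ (c : ℕ → ℝ) (F : Finset ℕ), (∀ k, |c k| ≤ 1) → (∀ k ∈ F, N ≤ k) →
      ‖T (ind c F)‖ ≤ ε := by
  by_contra hcon
  push_neg at hcon
  choose c F h1 h2 h3 using hcon
  set N : ℕ → ℕ := fun p => Nat.rec 0 (fun _ prev => (F prev).sup id + prev + 1) p with hN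
  have hNsucc : ∀ p, N (p+1) = (F (N p)).sup id + N p + 1 := fun p => rfl
  have hNmono : StrictMono N := strictMono_nat_of_lt_succ fun p => by
    rw [hNsucc]; omega
  set u : ℕ → C₀(ℕ, ℝ) := fun p => ind (c (N p)) (F (N p)) with hu
  have hsupp : ∀ p k, k ∉ F (N p) → u p k = 0 := fun p k hk => by
    simp [hu, ind_apply, hk]
  have hdisj : ∀ p q, p ≠ q → Disjoint (F (N p)) (F (N q)) := by
    have key : ∀ p q, p < q → Disjoint (F (N p)) (F (N q)) := by
      intro p q hpq
      rw [Finset.disjoint_left]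
      intro k hkp hkq
      have h1k : k ≤ (F (N p)).sup id := Finset.le_sup (f := id) hkp
      have h2k : N q ≤ k := h2 (N q) k hkq
      have h3k : N (p+1) ≤ N q := hNmono.monotone (Nat.succ_le_of_lt hpq)
      rw [hNsucc] at h3k
      omega
    intro p q hpq
    rcases lt_or_gt_of_ne hpq with h | h
    · exact key p q h
    · exact (key q p h).symm
  have hnorm : ∀ p, ‖u p‖ ≤ 1 := by
    intro p
    refine norm_le_of_forall zero_le_one fun k => ?_
    rw [hu]
    simp only [ind_apply]
    split
    · exact h1 (N p) k
    · simp
  exact block_lemma T hT u (fun p => F (N p)) hsupp hdisj hnorm hε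
    (fun p => h3 (N p))

/-- Basis vectors and the finite-rank approximation. -/
lemma ind_eq_sum (c : ℕ → ℝ) (G : Finset ℕ) :
    ind c G = ∑ k ∈ G, c k • ind (fun _ => 1) {k} := by
  ext j
  rw [coe_sum]
  by_cases hj : j ∈ G
  · rw [Finset.sum_eq_single_of_mem j hj (fun k hk hkj => by
      show c k * _ = 0
      simp [Finset.mem_singleton, (Ne.symm hkj)])]
    show _ = c j * _
    simp [hj]
  · rw [Finset.sum_eq_zero (fun k hk => by
      show c k * (if j ∈ ({k} : Finset ℕ) then (1:ℝ) else 0) = 0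
      rw [if_neg (fun h => hj (by rwa [Finset.mem_singleton.mp h])), mul_zero])]
    simp [hj]

theorem main (T : C₀(ℕ, ℝ) →L[ℝ] Y) [CompleteSpace Y] (hT : IsWeaklyCompactOperator T) :
    IsCompactOperator T := by
  refine ⟨closure (T '' closedBall 0 1), ?_, ?_⟩
  · -- compactness
    rw [isCompact_iff_totallyBounded_isComplete]
    refine ⟨TotallyBounded.closure ?_, isClosed_closure.isComplete⟩
    rw [totallyBounded_iff]
    intro ε' hε'
    have hε : 0 < ε' / 3 := by linarith
    obtain ⟨N, hN⟩ := core T hT hε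
    -- the compact finite-rank piece
    set eb : ℕ → C₀(ℕ, ℝ) := fun k => ind (fun _ => 1) {k} with heb
    set G : (ℕ → ℝ) → Y := fun c => ∑ k ∈ Finset.range N, c k • T (eb k) with hG
    have hGcont : Continuous G := by
      refine continuous_finset_sum _ fun k _ => ?_
      exact (continuous_apply k).smul continuous_const
    set cube : Set (ℕ → ℝ) := Set.pi Set.univ (fun _ => Set.Icc (-1 : ℝ) 1) with hcube
    have hcubecompact : IsCompact cube := isCompact_univ_pi fun _ => isCompact_Icc
    have hKc : IsCompact (G '' cube) := hcubecompact.image hGcont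
    obtain ⟨t, htfin, htsub⟩ := totallyBounded_iff.mp hKc.totallyBounded (ε' / 3) hε
    refine ⟨t, htfin, ?_⟩
    rintro _ ⟨x, hx, rfl⟩
    rw [mem_closedBall_zero_iff] at hx
    -- G of the coordinates of x
    have hxc : (⇑x : ℕ → ℝ) ∈ cube := by
      intro k _
      rw [Set.mem_Icc, ← abs_le]
      exact (norm_apply_le x k).trans hx
    have hGx : G ⇑x = T (ind ⇑x (Finset.range N)) := by
      rw [hG, ind_eq_sum, map_sum]
      refine (Finset.sum_congr rfl fun k _ => ?_).symm
      rw [map_smul]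
    -- bound ‖T x - G x‖
    have htail : ‖T x - G ⇑x‖ ≤ ε' / 3 := by
      rw [hGx, ← map_sub]
      -- approximate x - ind x (range N) by finitely supported tails
      have happrox : Tendsto (fun j => ind ⇑x ((Finset.range j).filter (N ≤ ·))) atTop
          (𝓝 (x - ind ⇑x (Finset.range N))) := by
        rw [Metric.tendsto_atTop]
        intro δ hδ
        have hzero : ∀ᶠ k in atTop, |x k| < δ / 2 := by
          have := x.zero_at_infty'
          rw [Filter.cocompact_eq_cofinite, Nat.cofinite_eq_atTop] at this
          have := Metric.tendsto_nhds.mp this (δ / 2) (by linarith)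
          simpa [Real.dist_eq] using this
        obtain ⟨j₀, hj₀⟩ := eventually_atTop.mp hzero
        refine ⟨j₀, fun j hj => ?_⟩
        rw [dist_eq_norm]
        have : ‖ind ⇑x ((Finset.range j).filter (N ≤ ·)) - (x - ind ⇑x (Finset.range N))‖
            ≤ δ / 2 := by
          refine norm_le_of_forall (by linarith) fun k => ?_
          show |ind ⇑x ((Finset.range j).filter (N ≤ ·)) k - (x k - ind ⇑x (Finset.range N) k)| ≤ δ / 2
          simp only [ind_apply, Finset.mem_filter, Finset.mem_range]
          have h0 : (0:ℝ) ≤ δ / 2 := by linarith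
          rcases lt_or_ge k N with hkN | hkN
          · rw [if_neg (by omega : ¬(k < j ∧ N ≤ k)), if_pos hkN]
            simpa using h0
          · rcases lt_or_ge k j with hkj | hkj
            · rw [if_pos ⟨hkj, hkN⟩, if_neg (by omega : ¬ k < N)]
              simpa using h0
            · rw [if_neg (by omega : ¬(k < j ∧ N ≤ k)), if_neg (by omega : ¬ k < N)]
              have := hj₀ k (by omega)
              rw [sub_zero, zero_sub, abs_neg]
              linarith
        linarith [this]
      have hTlim : Tendsto (fun j => T (ind ⇑x ((Finset.range j).filter (N ≤ ·)))) atTop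
          (𝓝 (T (x - ind ⇑x (Finset.range N)))) := (T.continuous.tendsto _).comp happrox
      have hbound : ∀ j, ‖T (ind ⇑x ((Finset.range j).filter (N ≤ ·)))‖ ≤ ε' / 3 := by
        intro j
        refine hN ⇑x _ (fun k => (norm_apply_le x k).trans hx) fun k hk => ?_
        exact (Finset.mem_filter.mp hk).2
      exact le_of_tendsto ((continuous_norm.tendsto _).comp hTlim)
        (Eventually.of_forall hbound)
    obtain ⟨v, hvt, hvball⟩ := Set.mem_iUnion₂.mp (htsub ⟨⇑x, hxc, rfl⟩)
    refine Set.mem_iUnion₂.mpr ⟨v, hvt, ?_⟩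
    rw [mem_ball] at hvball ⊢
    calc dist (T x) v ≤ dist (T x) (G ⇑x) + dist (G ⇑x) v := dist_triangle _ _ _
      _ < ε' / 3 + ε' / 3 := by
          rw [dist_eq_norm]
          exact add_lt_add_of_le_of_lt htail hvball
      _ ≤ ε' := by linarith
  · -- preimage is a neighborhood of 0
    refine Filter.mem_of_superset (Metric.closedBall_mem_nhds 0 one_pos) ?_
    intro x hx
    exact subset_closure ⟨x, hx, rfl⟩


end Stmt12
end
end Aux

/-- Every weakly compact operator `T : c₀ → Y` is compact. -/
theorem stmt12
    {Y : Type} [NormedAddCommGroup Y] [NormedSpace ℝ Y] [CompleteSpace Y]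
    (T : C₀(ℕ, ℝ) →L[ℝ] Y) (hT : IsWeaklyCompactOperator T) :
    IsCompactOperator T := by
  exact Stmt12.main T hT
end

section
/- If a short exact sequence 0 → Y → X →q Z → 0 of Banach spaces admits, for every Banach space V, a lifting of every finite-rank operator t : V → Z to a finite-rank operator T : V → X with q ∘ T = t and ‖T‖ ≤ λ‖t‖ (uniform 𝔉-lifting), then for every Banach space V every approximable operator t : V → Z lifts to an approximable operator T : V → X with q ∘ T = t. -/
set_option maxHeartbeats 1000000
set_option synthInstance.maxHeartbeats 400000

/-- A bounded operator has finite rank if its range is finite dimensional. -/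
def IsFiniteRankOperator {V Z : Type*} [NormedAddCommGroup V] [NormedSpace ℝ V]
    [NormedAddCommGroup Z] [NormedSpace ℝ Z] (T : V →L[ℝ] Z) : Prop :=
  FiniteDimensional ℝ (LinearMap.range (T : V →ₗ[ℝ] Z))

/-- A bounded operator is approximable if it is an operator-norm limit of finite-rank
operators. -/
def IsApproximableOperator {V Z : Type*} [NormedAddCommGroup V] [NormedSpace ℝ V]
    [NormedAddCommGroup Z] [NormedSpace ℝ Z] (T : V →L[ℝ] Z) : Prop :=
  ∀ ε > (0:ℝ), ∃ F : V →L[ℝ] Z, IsFiniteRankOperator F ∧ ‖T - F‖ < ε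

section aux
variable {V Z : Type*} [NormedAddCommGroup V] [NormedSpace ℝ V]
    [NormedAddCommGroup Z] [NormedSpace ℝ Z]

lemma fr_zero : IsFiniteRankOperator (0 : V →L[ℝ] Z) := by
  unfold IsFiniteRankOperator
  exact Submodule.finiteDimensional_of_le (S₂ := ⊥) (by rintro z ⟨v, rfl⟩; simp)

lemma fr_add {f g : V →L[ℝ] Z} (hf : IsFiniteRankOperator f) (hg : IsFiniteRankOperator g) :
    IsFiniteRankOperator (f + g) := by
  unfold IsFiniteRankOperator at *
  haveI : FiniteDimensional ℝ (LinearMap.range (f : V →ₗ[ℝ] Z)) := hf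
  haveI : FiniteDimensional ℝ (LinearMap.range (g : V →ₗ[ℝ] Z)) := hg
  have h : LinearMap.range ((f + g : V →L[ℝ] Z) : V →ₗ[ℝ] Z) ≤
      LinearMap.range (f : V →ₗ[ℝ] Z) ⊔ LinearMap.range (g : V →ₗ[ℝ] Z) := by
    rintro z ⟨v, rfl⟩
    exact Submodule.add_mem_sup (LinearMap.mem_range_self _ v) (LinearMap.mem_range_self _ v)
  exact Submodule.finiteDimensional_of_le h

lemma fr_neg {f : V →L[ℝ] Z} (hf : IsFiniteRankOperator f) : IsFiniteRankOperator (-f) := by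
  unfold IsFiniteRankOperator at *
  haveI : FiniteDimensional ℝ (LinearMap.range (f : V →ₗ[ℝ] Z)) := hf
  have h : LinearMap.range ((-f : V →L[ℝ] Z) : V →ₗ[ℝ] Z) ≤ LinearMap.range (f : V →ₗ[ℝ] Z) := by
    rintro z ⟨v, rfl⟩; exact ⟨-v, by simp⟩
  exact Submodule.finiteDimensional_of_le h

lemma fr_sub {f g : V →L[ℝ] Z} (hf : IsFiniteRankOperator f) (hg : IsFiniteRankOperator g) :
    IsFiniteRankOperator (f - g) := by
  rw [sub_eq_add_neg]; exact fr_add hf (fr_neg hg)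

lemma fr_sum {ι : Type*} (s : Finset ι) (f : ι → V →L[ℝ] Z)
    (hf : ∀ i ∈ s, IsFiniteRankOperator (f i)) :
    IsFiniteRankOperator (∑ i ∈ s, f i) := by
  classical
  induction s using Finset.induction with
  | empty => simpa using fr_zero
  | insert a s h ih =>
    rw [Finset.sum_insert h]
    exact fr_add (hf _ (Finset.mem_insert_self _ _))
      (ih fun i hi => hf i (Finset.mem_insert_of_mem hi))
end aux

/-- If a short exact sequence `0 → Y → X →q Z → 0` uniformly `𝔉`-lifts (finite-rank
operators into `Z` lift to finite-rank operators into `X` with norm control `λ`), then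
every approximable operator into `Z` lifts to an approximable operator into `X`. -/
theorem stmt15
    {Y X Z : Type} [NormedAddCommGroup Y] [NormedSpace ℝ Y] [CompleteSpace Y]
    [NormedAddCommGroup X] [NormedSpace ℝ X] [CompleteSpace X]
    [NormedAddCommGroup Z] [NormedSpace ℝ Z] [CompleteSpace Z]
    (i : Y →L[ℝ] X) (q : X →L[ℝ] Z)
    (hi : Isometry i) (hq : Function.Surjective q)
    (hexact : LinearMap.ker (q : X →ₗ[ℝ] Z) = LinearMap.range (i : Y →ₗ[ℝ] X))
    (lam : ℝ) (hlam : 0 < lam)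
    (hlift : ∀ (V : Type) [NormedAddCommGroup V] [NormedSpace ℝ V] [CompleteSpace V],
      ∀ t : V →L[ℝ] Z, IsFiniteRankOperator t →
        ∃ T : V →L[ℝ] X, IsFiniteRankOperator T ∧ q.comp T = t ∧ ‖T‖ ≤ lam * ‖t‖) :
    ∀ (V : Type) [NormedAddCommGroup V] [NormedSpace ℝ V] [CompleteSpace V],
      ∀ t : V →L[ℝ] Z, IsApproximableOperator t →
        ∃ T : V →L[ℝ] X, IsApproximableOperator T ∧ q.comp T = t := by
  intro V _ _ _ t ht
  -- choose an approximating sequence of finite-rank operators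
  have hF : ∀ n : ℕ, ∃ F : V →L[ℝ] Z, IsFiniteRankOperator F ∧ ‖t - F‖ < (1/2 : ℝ)^n := by
    intro n; exact ht _ (by positivity)
  choose F hFr hFn using hF
  -- the successive differences
  set d : ℕ → V →L[ℝ] Z := fun n => F (n+1) - F n with hd
  have hdr : ∀ n, IsFiniteRankOperator (d n) := fun n => fr_sub (hFr _) (hFr _)
  have hdn : ∀ n, ‖d n‖ ≤ 2 * (1/2 : ℝ)^n := by
    intro n
    have h1 : d n = (t - F n) - (t - F (n+1)) := by simp [hd]
    have h2 : ‖d n‖ ≤ ‖t - F n‖ + ‖t - F (n+1)‖ := by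
      rw [h1]; exact (norm_sub_le _ _)
    have h3 : ((1:ℝ)/2)^(n+1) ≤ (1/2 : ℝ)^n := by
      apply pow_le_pow_of_le_one <;> norm_num
    nlinarith [hFn n, hFn (n+1)]
  -- lift F 0 and the differences
  obtain ⟨T0, hT0r, hT0q, _⟩ := hlift V (F 0) (hFr 0)
  choose D hDr hDq hDn using fun n => hlift V (d n) (hdr n)
  have hDsum : Summable D := by
    apply Summable.of_norm_bounded (g := fun n => lam * (2 * (1/2 : ℝ)^n))
    · exact ((summable_geometric_of_lt_one (by norm_num) (by norm_num)).mul_left 2).mul_left lam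
    · intro n
      refine (hDn n).trans ?_
      have := hdn n
      nlinarith
  set T : V →L[ℝ] X := T0 + ∑' n, D n with hT
  -- the partial sums telescope
  have hpart : ∀ n, ∑ k ∈ Finset.range n, d k = F n - F 0 := by
    intro n
    induction n with
    | zero => simp
    | succ n ih => rw [Finset.sum_range_succ, ih]; simp only [hd]; abel
  -- F n tends to t
  have hFt : Filter.Tendsto F Filter.atTop (nhds t) := by
    rw [tendsto_iff_norm_sub_tendsto_zero]
    apply squeeze_zero (fun n => norm_nonneg _) (fun n => (norm_sub_rev (F n) t ▸ (hFn n).le))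
    exact tendsto_pow_atTop_nhds_zero_of_lt_one (by norm_num) (by norm_num)
  -- the sum of differences is t - F 0
  have hds : Summable d := by
    apply Summable.of_norm_bounded (g := fun n => 2 * (1/2 : ℝ)^n)
      ((summable_geometric_of_lt_one (by norm_num) (by norm_num)).mul_left 2) hdn
  have hdsum : (∑' n, d n) = t - F 0 := by
    have h1 : Filter.Tendsto (fun n => ∑ k ∈ Finset.range n, d k) Filter.atTop
        (nhds (∑' n, d n)) := hds.hasSum.tendsto_sum_nat
    have h2 : Filter.Tendsto (fun n => ∑ k ∈ Finset.range n, d k) Filter.atTop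
        (nhds (t - F 0)) := by
      simp only [hpart]
      exact hFt.sub tendsto_const_nhds
    exact tendsto_nhds_unique h1 h2
  refine ⟨T, ?_, ?_⟩
  · -- T is approximable
    intro ε hε
    have hSt : Filter.Tendsto (fun n => T0 + ∑ k ∈ Finset.range n, D k) Filter.atTop (nhds T) :=
      Filter.Tendsto.const_add T0 hDsum.hasSum.tendsto_sum_nat
    obtain ⟨N, hN⟩ := Metric.tendsto_atTop.mp hSt ε hε
    refine ⟨T0 + ∑ k ∈ Finset.range N, D k, ?_, ?_⟩
    · exact fr_add hT0r (fr_sum _ _ fun k _ => hDr k)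
    · have := hN N le_rfl
      rwa [dist_eq_norm, norm_sub_rev] at this
  · -- q ∘ T = t
    have hmap : q.comp (∑' n, D n) = ∑' n, q.comp (D n) := by
      have := (ContinuousLinearMap.compL ℝ V X Z q).map_tsum hDsum
      simpa using this
    have : q.comp T = q.comp T0 + q.comp (∑' n, D n) := by
      ext v; simp [hT]
    rw [this, hmap, hT0q]
    have : (∑' n, q.comp (D n)) = ∑' n, d n := by
      congr 1; ext n; rw [hDq]
    rw [this, hdsum]
    abel
end

section
/- If Z is a Banach space with the bounded approximation property, then every compact operator K : V → Z is approximable, i.e. 𝔎(V,Z) = A(V,Z) for every Banach space V. -/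
/-- A Banach space `Z` has the bounded approximation property if there is `C > 0` such
that for every `ε > 0` and compact `K ⊆ Z` there is a finite-rank operator `T` on `Z`
with `‖T‖ ≤ C` and `‖T z - z‖ ≤ ε` on `K`. -/
def HasBAP (Z : Type*) [NormedAddCommGroup Z] [NormedSpace ℝ Z] : Prop :=
  ∃ C > (0:ℝ), ∀ ε > (0:ℝ), ∀ K : Set Z, IsCompact K →
    ∃ T : Z →L[ℝ] Z, IsFiniteRankOperator T ∧ ‖T‖ ≤ C ∧ ∀ z ∈ K, ‖T z - z‖ ≤ ε

/-- A finite-rank operator is a compact operator. -/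
lemma isCompactOperator_of_finiteRank {V Z : Type*} [NormedAddCommGroup V] [NormedSpace ℝ V]
    [NormedAddCommGroup Z] [NormedSpace ℝ Z] {F : V →L[ℝ] Z} (hF : IsFiniteRankOperator F) :
    IsCompactOperator F := by
  haveI : FiniteDimensional ℝ (LinearMap.range (F : V →ₗ[ℝ] Z)) := hF
  refine (isCompactOperator_iff_image_closedBall_subset_compact (𝕜₁ := ℝ)
    (F : V →ₗ[ℝ] Z) one_pos).mpr ⟨Subtype.val '' Metric.closedBall (0 : LinearMap.range (F : V →ₗ[ℝ] Z)) ‖F‖,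
    (ProperSpace.isCompact_closedBall _ _).image continuous_subtype_val, ?_⟩
  rintro _ ⟨v, hv, rfl⟩
  refine ⟨⟨F v, LinearMap.mem_range_self _ v⟩, ?_, rfl⟩
  rw [Metric.mem_closedBall, dist_zero_right]
  calc ‖(⟨F v, LinearMap.mem_range_self _ v⟩ : LinearMap.range (F : V →ₗ[ℝ] Z))‖ = ‖F v‖ := rfl
    _ ≤ ‖F‖ * ‖v‖ := F.le_opNorm v
    _ ≤ ‖F‖ * 1 := by
        have := Metric.mem_closedBall.mp hv
        rw [dist_zero_right] at this
        exact mul_le_mul_of_nonneg_left this (norm_nonneg F)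
    _ = ‖F‖ := mul_one _

/-- If `Z` has the bounded approximation property, then every compact operator
`K : V → Z` is approximable: `𝔎(V,Z) = A(V,Z)`. -/
theorem stmt16
    {Z : Type} [NormedAddCommGroup Z] [NormedSpace ℝ Z] [CompleteSpace Z]
    (hZ : HasBAP Z) :
    ∀ (V : Type) [NormedAddCommGroup V] [NormedSpace ℝ V] [CompleteSpace V],
      ∀ K : V →L[ℝ] Z, IsCompactOperator K ↔ IsApproximableOperator K := by
  intro V _ _ _ K
  constructor
  · -- compact → approximable
    intro hK ε hε
    obtain ⟨C, hC, hBAP⟩ := hZ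
    set S := closure (K '' Metric.closedBall 0 1) with hS
    have hScomp : IsCompact S := hK.isCompact_closure_image_closedBall (𝕜₁ := ℝ) 1
    obtain ⟨T, hTfr, -, hTapprox⟩ := hBAP (ε / 2) (by linarith) S hScomp
    refine ⟨T.comp K, ?_, ?_⟩
    · haveI : FiniteDimensional ℝ (LinearMap.range (T : Z →ₗ[ℝ] Z)) := hTfr
      exact Submodule.finiteDimensional_of_le
        (LinearMap.range_comp_le_range (K : V →ₗ[ℝ] Z) (T : Z →ₗ[ℝ] Z))
    · have hbound : ‖K - T.comp K‖ ≤ ε / 2 := by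
        refine ContinuousLinearMap.opNorm_le_bound' _ (by linarith) fun v hv => ?_
        have hv0 : v ≠ 0 := fun h => hv (by simp [h])
        have hvpos : (0:ℝ) < ‖v‖ := (norm_nonneg v).lt_of_ne' hv
        set u := ‖v‖⁻¹ • v with hu
        have hunorm : ‖u‖ = 1 := by
          rw [hu, norm_smul, norm_inv, norm_norm, inv_mul_cancel₀ hv]
        have hKu : K u ∈ S := subset_closure ⟨u, by simp [Metric.mem_closedBall, hunorm], rfl⟩
        have h1 : ‖(K - T.comp K) u‖ ≤ ε / 2 := by
          have := hTapprox (K u) hKu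
          simpa [norm_sub_rev] using this
        have h2 : (K - T.comp K) v = ‖v‖ • (K - T.comp K) u := by
          rw [hu, map_smul, smul_smul, mul_inv_cancel₀ (ne_of_gt hvpos), one_smul]
        rw [h2, norm_smul, norm_norm, mul_comm]
        exact mul_le_mul_of_nonneg_right h1 (norm_nonneg v)
      linarith
  · -- approximable → compact
    intro hA
    have hseq : ∀ n : ℕ, ∃ F : V →L[ℝ] Z, IsFiniteRankOperator F ∧ ‖K - F‖ < 1 / (n + 1) :=
      fun n => hA (1 / (n + 1)) (by positivity)
    choose F hFfr hFnorm using hseq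
    have htendsto : Filter.Tendsto F Filter.atTop (nhds K) := by
      rw [tendsto_iff_norm_sub_tendsto_zero]
      refine squeeze_zero (fun n => norm_nonneg _) (fun n => ?_) tendsto_one_div_add_atTop_nhds_zero_nat
      rw [norm_sub_rev]
      exact (hFnorm n).le
    exact isCompactOperator_of_tendsto htendsto
      (Filter.Eventually.of_forall fun n => isCompactOperator_of_finiteRank (hFfr n))
end

section
/- If Y is a closed subspace of a Banach space X that is locally complemented (there is λ > 0 such that every finite-dimensional subspace E ⊆ X admits an operator T_E : E → Y with ‖T_E‖ ≤ λ and T_E fixing E ∩ Y), then there is a bounded linear operator s : Y* → X* with i* ∘ s = id_{Y*}, where i : Y → X is the inclusion; in particular every functional on Y extends to X linearly and boundedly in y*. -/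
open NormedSpace Filter Topology

/-- If a closed subspace `Y` of a Banach space `X` is locally complemented (there is
`λ > 0` such that every finite-dimensional subspace `E ⊆ X` admits `T_E : E → Y` with
`‖T_E‖ ≤ λ` fixing `E ∩ Y`), then the restriction map `i* : X* → Y*` admits a bounded
linear right inverse `s`: every functional on `Y` extends to `X` linearly and boundedly
in `y*`. -/
theorem stmt18
    {X : Type} [NormedAddCommGroup X] [NormedSpace ℝ X] [CompleteSpace X]
    (Y : Submodule ℝ X) (hYc : IsClosed (Y : Set X))
    (lam : ℝ) (hlam : 0 < lam)
    (hloc : ∀ E : Submodule ℝ X, FiniteDimensional ℝ E →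
      ∃ T : E →L[ℝ] Y, ‖T‖ ≤ lam ∧
        ∀ (x : X) (hxE : x ∈ E) (hxY : x ∈ Y), T ⟨x, hxE⟩ = ⟨x, hxY⟩) :
    ∃ s : StrongDual ℝ Y →L[ℝ] StrongDual ℝ X,
      ∀ (g : StrongDual ℝ Y), (s g).comp Y.subtypeL = g := by
  classical
  -- the filter of "large" finite-dimensional subspaces
  let p : {E₀ : Submodule ℝ X // FiniteDimensional ℝ E₀} → Filter (Submodule ℝ X) :=
    fun E₀ => 𝓟 {E : Submodule ℝ X | FiniteDimensional ℝ E ∧ E₀.1 ≤ E}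
  have hne : Nonempty {E₀ : Submodule ℝ X // FiniteDimensional ℝ E₀} := ⟨⟨⊥, inferInstance⟩⟩
  have hdir : Directed (· ≥ ·) p := by
    rintro ⟨E₀, h₀⟩ ⟨E₁, h₁⟩
    refine ⟨⟨E₀ ⊔ E₁, inferInstance⟩, ?_, ?_⟩ <;>
    · simp only [p, ge_iff_le, le_principal_iff, mem_principal, Set.setOf_subset_setOf]
      rintro E ⟨hE, hle⟩
      exact ⟨hE, le_trans (by simp) hle⟩
  have hbot : ∀ i, (p i).NeBot := by
    rintro ⟨E₀, h₀⟩
    refine principal_neBot_iff.mpr ⟨E₀, h₀, le_rfl⟩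
  have hF : (⨅ i, p i).NeBot := iInf_neBot_of_directed hdir hbot
  let U : Ultrafilter (Submodule ℝ X) := Ultrafilter.of (⨅ i, p i)
  have hU : ∀ (E₀ : Submodule ℝ X), FiniteDimensional ℝ E₀ →
      ∀ᶠ E : Submodule ℝ X in (U : Filter (Submodule ℝ X)), FiniteDimensional ℝ E ∧ E₀ ≤ E := by
    intro E₀ h₀
    have h1 : (U : Filter (Submodule ℝ X)) ≤ p ⟨E₀, h₀⟩ :=
      (Ultrafilter.of_le _).trans (iInf_le _ _)
    exact le_principal_iff.mp h1
  have hUx : ∀ x : X, ∀ᶠ E : Submodule ℝ X in (U : Filter (Submodule ℝ X)),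
      FiniteDimensional ℝ E ∧ x ∈ E := by
    intro x
    filter_upwards [hU (Submodule.span ℝ {x}) inferInstance] with E hE
    exact ⟨hE.1, hE.2 (Submodule.mem_span_singleton_self x)⟩
  -- the approximating scalars
  let f : StrongDual ℝ Y → X → Submodule ℝ X → ℝ := fun g x E =>
    if h : FiniteDimensional ℝ E ∧ x ∈ E then g ((hloc E h.1).choose ⟨x, h.2⟩) else 0
  have hfb : ∀ g x E, |f g x E| ≤ lam * ‖g‖ * ‖x‖ := by
    intro g x E
    by_cases h : FiniteDimensional ℝ E ∧ x ∈ E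
    · simp only [f, dif_pos h]
      obtain ⟨hTn, -⟩ := (hloc E h.1).choose_spec
      set T := (hloc E h.1).choose
      calc |g (T ⟨x, h.2⟩)| = ‖g (T ⟨x, h.2⟩)‖ := (Real.norm_eq_abs _).symm
        _ ≤ ‖g‖ * ‖T ⟨x, h.2⟩‖ := g.le_opNorm _
        _ ≤ ‖g‖ * (‖T‖ * ‖(⟨x, h.2⟩ : E)‖) := by
            exact mul_le_mul_of_nonneg_left (T.le_opNorm _) (norm_nonneg g)
        _ ≤ ‖g‖ * (lam * ‖x‖) := by
            have hx : ‖(⟨x, h.2⟩ : E)‖ = ‖x‖ := rfl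
            rw [hx]
            exact mul_le_mul_of_nonneg_left
              (mul_le_mul_of_nonneg_right hTn (norm_nonneg _)) (norm_nonneg g)
        _ = lam * ‖g‖ * ‖x‖ := by ring
    · simp only [f, dif_neg h, abs_zero]
      positivity
  -- the ultrafilter limits exist
  have hlim : ∀ g x, ∃ c : ℝ, Tendsto (f g x) (U : Filter (Submodule ℝ X)) (𝓝 c) := by
    intro g x
    have hmem : (U.map (f g x) : Filter ℝ) ≤
        𝓟 (Set.Icc (-(lam * ‖g‖ * ‖x‖)) (lam * ‖g‖ * ‖x‖)) := by
      rw [le_principal_iff, Ultrafilter.mem_coe, Ultrafilter.mem_map]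
      refine U.toFilter.univ_mem' fun E => ?_
      exact abs_le.mp (hfb g x E)
    obtain ⟨c, -, hc⟩ := isCompact_Icc.ultrafilter_le_nhds (U.map (f g x)) hmem
    exact ⟨c, hc⟩
  let L : StrongDual ℝ Y → X → ℝ := fun g x => (hlim g x).choose
  have hL : ∀ g x, Tendsto (f g x) (U : Filter (Submodule ℝ X)) (𝓝 (L g x)) :=
    fun g x => (hlim g x).choose_spec
  -- additivity in x
  have hadd : ∀ g x y, L g (x + y) = L g x + L g y := by
    intro g x y
    refine tendsto_nhds_unique (hL g (x + y)) (((hL g x).add (hL g y)).congr' ?_)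
    filter_upwards [hUx x, hUx y] with E hx hy
    have hc1 : FiniteDimensional ℝ E ∧ x ∈ E := hx
    have hc2 : FiniteDimensional ℝ E ∧ y ∈ E := hy
    have hc3 : FiniteDimensional ℝ E ∧ x + y ∈ E := ⟨hx.1, add_mem hx.2 hy.2⟩
    show f g x E + f g y E = f g (x + y) E
    rw [show f g x E = g ((hloc E hc1.1).choose ⟨x, hc1.2⟩) from dif_pos hc1,
      show f g y E = g ((hloc E hc2.1).choose ⟨y, hc2.2⟩) from dif_pos hc2,
      show f g (x + y) E = g ((hloc E hc3.1).choose ⟨x + y, hc3.2⟩) from dif_pos hc3]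
    have hv : (⟨x + y, hc3.2⟩ : E) = (⟨x, hc1.2⟩ : E) + (⟨y, hc2.2⟩ : E) := rfl
    rw [hv, map_add, map_add]
  have hsmul : ∀ g (c : ℝ) x, L g (c • x) = c * L g x := by
    intro g c x
    refine tendsto_nhds_unique (hL g (c • x)) (((hL g x).const_mul c).congr' ?_)
    filter_upwards [hUx x] with E hx
    have hc1 : FiniteDimensional ℝ E ∧ x ∈ E := hx
    have hc2 : FiniteDimensional ℝ E ∧ c • x ∈ E := ⟨hx.1, SMulMemClass.smul_mem c hx.2⟩
    show c * f g x E = f g (c • x) E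
    rw [show f g x E = g ((hloc E hc1.1).choose ⟨x, hc1.2⟩) from dif_pos hc1,
      show f g (c • x) E = g ((hloc E hc2.1).choose ⟨c • x, hc2.2⟩) from dif_pos hc2]
    have hv : (⟨c • x, hc2.2⟩ : E) = c • (⟨x, hc1.2⟩ : E) := rfl
    rw [hv, map_smul, map_smul, smul_eq_mul]
  have hbound : ∀ g x, |L g x| ≤ lam * ‖g‖ * ‖x‖ := fun g x =>
    le_of_tendsto' (hL g x).abs fun E => hfb g x E
  -- linearity in g (pointwise in E, hence in the limit)
  have hgadd : ∀ g g' x, L (g + g') x = L g x + L g' x := by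
    intro g g' x
    refine tendsto_nhds_unique (hL (g + g') x) (((hL g x).add (hL g' x)).congr fun E => ?_)
    by_cases h : FiniteDimensional ℝ E ∧ x ∈ E
    · simp only [f, dif_pos h, ContinuousLinearMap.add_apply]
    · simp only [f, dif_neg h, add_zero]
  have hgsmul : ∀ (c : ℝ) g x, L (c • g) x = c * L g x := by
    intro c g x
    refine tendsto_nhds_unique (hL (c • g) x) (((hL g x).const_mul c).congr fun E => ?_)
    by_cases h : FiniteDimensional ℝ E ∧ x ∈ E
    · simp only [f, dif_pos h, ContinuousLinearMap.smul_apply, smul_eq_mul]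
    · simp only [f, dif_neg h, mul_zero]
  -- build the extension operator
  let φ : StrongDual ℝ Y → StrongDual ℝ X := fun g =>
    LinearMap.mkContinuous
      { toFun := L g, map_add' := hadd g, map_smul' := hsmul g }
      (lam * ‖g‖)
      (fun x => by
        rw [Real.norm_eq_abs]
        exact hbound g x)
  have hφ : ∀ g x, φ g x = L g x := fun g x => rfl
  refine ⟨LinearMap.mkContinuous
    { toFun := φ,
      map_add' := fun g g' => ContinuousLinearMap.ext fun x => by
        simp only [ContinuousLinearMap.add_apply, hφ]
        exact hgadd g g' x,
      map_smul' := fun c g => ContinuousLinearMap.ext fun x => by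
        simp only [RingHom.id_apply, ContinuousLinearMap.smul_apply, hφ, smul_eq_mul]
        exact hgsmul c g x }
    lam
    (fun g => by
      show ‖φ g‖ ≤ lam * ‖g‖
      exact LinearMap.mkContinuous_norm_le _ (by positivity) _), ?_⟩
  intro g
  refine ContinuousLinearMap.ext fun y => ?_
  show L g (y : X) = g y
  refine tendsto_nhds_unique (hL g (y : X)) (tendsto_const_nhds.congr' ?_)
  filter_upwards [hUx (y : X)] with E hE
  have hc : FiniteDimensional ℝ E ∧ (y : X) ∈ E := hE
  obtain ⟨-, hfix⟩ := (hloc E hc.1).choose_spec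
  show g y = f g (y : X) E
  rw [show f g (y : X) E = g ((hloc E hc.1).choose ⟨(y : X), hc.2⟩) from dif_pos hc,
    hfix (y : X) hc.2 y.2]
end
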